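/- Let d ≥ 1 be an integer with 3 ∤ d and let A = (ℤ/3dℤ) × (ℤ/3dℤ). If x, y ∈ A each have additive order equal to d or to 3d, then there exists t ∈ A with 3·t = 0 such that both x + t and y + t have additive order exactly 3d. -/

import Mathlib

private lemma kill_all (d : ℕ) (a : ZMod (3 * d) × ZMod (3 * d)) : (3 * d) • a = 0 := by
  have h : ∀ b : ZMod (3 * d), (3 * d) • b = 0 := by
    intro b
    rw [nsmul_eq_mul]
    simp
  ext
  · exact h a.1
  · exact h a.2

private lemma key (d : ℕ) (hd : 1 ≤ d) (h3 : ¬ (3 ∣ d))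
    (z t : ZMod (3 * d) × ZMod (3 * d))
    (hz : addOrderOf z = d ∨ addOrderOf z = 3 * d)
    (ht : 3 • t = 0) (hne : d • (z + t) ≠ 0) :
    addOrderOf (z + t) = 3 * d := by
  have hd0 : d ≠ 0 := by omega
  set n := addOrderOf (z + t) with hn
  have hdvd : n ∣ 3 * d := addOrderOf_dvd_of_nsmul_eq_zero (kill_all d (z + t))
  have h1 : n • (z + t) = 0 := addOrderOf_nsmul_eq_zero _
  have hA : (3 * n) • (z + t) = 0 := by
    rw [mul_comm 3 n, mul_nsmul (z + t) n 3, h1, smul_zero]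
  have hB : (3 * n) • t = 0 := by
    rw [mul_nsmul t 3 n, ht, smul_zero]
  have h2 : (3 * n) • z = 0 := by
    calc (3 * n) • z = (3 * n) • (z + t) - (3 * n) • t := by rw [smul_add]; abel
    _ = 0 := by rw [hA, hB, sub_zero]
  have hzdvd : addOrderOf z ∣ 3 * n := addOrderOf_dvd_of_nsmul_eq_zero h2
  have hddvd3n : d ∣ 3 * n := by
    rcases hz with h | h
    · rwa [h] at hzdvd
    · exact dvd_trans ⟨3, by ring⟩ (h ▸ hzdvd)
  have hcop : Nat.Coprime d 3 := ((Nat.prime_three.coprime_iff_not_dvd).mpr h3).symm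
  have hdn : d ∣ n := hcop.dvd_of_dvd_mul_left hddvd3n
  obtain ⟨m, hm⟩ := hdn
  have hm3 : m ∣ 3 := by
    have h' : d * m ∣ d * 3 := by
      rw [← hm]
      rwa [mul_comm 3 d] at hdvd
    exact (mul_dvd_mul_iff_left hd0).mp h'
  rcases Nat.prime_three.eq_one_or_self_of_dvd m hm3 with h | h
  · exfalso
    apply hne
    have hnd : n = d := by rw [hm, h, mul_one]
    rw [hnd] at h1
    exact h1
  · rw [hm, h, mul_comm]

private lemma smul_of_mod3 (d : ℕ) (m : ℕ) (c : ZMod (3 * d) × ZMod (3 * d))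
    (h3c : 3 • c = 0) (hm : m % 3 = 1) : m • c = c := by
  obtain ⟨q, hq⟩ : ∃ q, m = 3 * q + 1 := ⟨m / 3, by omega⟩
  rw [hq, add_nsmul, one_nsmul, mul_nsmul c 3 q, h3c, smul_zero, zero_add]

theorem stmt_6 (d : ℕ) (hd : 1 ≤ d) (h3 : ¬ (3 ∣ d))
    (x y : ZMod (3 * d) × ZMod (3 * d))
    (hx : addOrderOf x = d ∨ addOrderOf x = 3 * d)
    (hy : addOrderOf y = d ∨ addOrderOf y = 3 * d) :
    ∃ t : ZMod (3 * d) × ZMod (3 * d), 3 • t = 0 ∧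
      addOrderOf (x + t) = 3 * d ∧ addOrderOf (y + t) = 3 * d := by
  have hd0 : d ≠ 0 := by omega
  set dc : ZMod (3 * d) := (d : ZMod (3 * d)) with hdc
  have h3dc : 3 • dc = 0 := by
    rw [hdc, nsmul_eq_mul]
    have : ((3 * d : ℕ) : ZMod (3 * d)) = 0 := by simp
    push_cast at this ⊢
    linear_combination this
  have hdc0 : dc ≠ 0 := by
    intro h
    have hdvd := (ZMod.natCast_eq_zero_iff d (3 * d)).mp h
    have := Nat.le_of_dvd (by omega) hdvd
    omega
  -- the three candidate 3-torsion elements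
  set c1 : ZMod (3 * d) × ZMod (3 * d) := (dc, 0) with hc1
  set c2 : ZMod (3 * d) × ZMod (3 * d) := (0, dc) with hc2
  set c3 : ZMod (3 * d) × ZMod (3 * d) := (dc, dc) with hc3
  have h3c1 : 3 • c1 = 0 := by rw [hc1, Prod.smul_mk, smul_zero, h3dc]; rfl
  have h3c2 : 3 • c2 = 0 := by rw [hc2, Prod.smul_mk, smul_zero, h3dc]; rfl
  have h3c3 : 3 • c3 = 0 := by rw [hc3, Prod.smul_mk, h3dc]; rfl
  have h12 : c1 ≠ c2 := by
    intro h
    exact hdc0 (congrArg Prod.fst h)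
  have h13 : c1 ≠ c3 := by
    intro h
    exact hdc0 ((congrArg Prod.snd h).symm)
  have h23 : c2 ≠ c3 := by
    intro h
    exact hdc0 ((congrArg Prod.fst h).symm)
  set a := d • x with ha
  set b := d • y with hb
  obtain ⟨c, h3c, hca, hcb⟩ : ∃ c : ZMod (3 * d) × ZMod (3 * d),
      3 • c = 0 ∧ c ≠ -a ∧ c ≠ -b := by
    by_cases e1 : c1 ≠ -a ∧ c1 ≠ -b
    · exact ⟨c1, h3c1, e1.1, e1.2⟩
    by_cases e2 : c2 ≠ -a ∧ c2 ≠ -b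
    · exact ⟨c2, h3c2, e2.1, e2.2⟩
    push_neg at e1 e2
    refine ⟨c3, h3c3, ?_, ?_⟩
    · intro h
      rcases Classical.em (c1 = -a) with h1a | h1a
      · exact h13 (h1a.trans h.symm)
      · rcases Classical.em (c2 = -a) with h2a | h2a
        · exact h23 (h2a.trans h.symm)
        · have hb1 := e1 h1a
          have hb2 := e2 h2a
          exact h12 (hb1.trans hb2.symm)
    · intro h
      rcases Classical.em (c1 = -b) with h1b | h1b
      · exact h13 (h1b.trans h.symm)
      · rcases Classical.em (c2 = -b) with h2b | h2b
        · exact h23 (h2b.trans h.symm)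
        · have ha1 : c1 = -a := by tauto
          have ha2 : c2 = -a := by tauto
          exact h12 (ha1.trans ha2.symm)
  -- t := d • c ; then d • t = (d*d) • c = c  since d*d ≡ 1 (mod 3)
  have hdd : (d * d) % 3 = 1 := by
    have hmod : d % 3 = 1 ∨ d % 3 = 2 := by omega
    rw [Nat.mul_mod]
    rcases hmod with h | h <;> rw [h]
  refine ⟨d • c, ?_, ?_, ?_⟩
  · rw [smul_comm, h3c, smul_zero]
  · apply key d hd h3 x (d • c) hx
    · rw [smul_comm, h3c, smul_zero]
    · rw [smul_add, ← ha, ← mul_nsmul c d d, smul_of_mod3 d (d*d) c h3c hdd]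
      intro h
      exact hca (eq_neg_of_add_eq_zero_right h)
  · apply key d hd h3 y (d • c) hy
    · rw [smul_comm, h3c, smul_zero]
    · rw [smul_add, ← hb, ← mul_nsmul c d d, smul_of_mod3 d (d*d) c h3c hdd]
      intro h
      exact hcb (eq_neg_of_add_eq_zero_right h)
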